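/- Under the same hypotheses, for every open set O ⊆ (-∞, 0] and every z ∈ O, liminf_{n→∞} aₙ log P( aₙ n L(n)(Zₙ - M) ∈ O ) ≥ z. -/

import Mathlib

open MeasureTheory Set Filter
open scoped Topology ENNReal NNReal

/-- `maxFirst W n ω = max {W 0 ω, …, W (n-1) ω}` for `n ≥ 1` (junk value `W 0 ω` for `n = 0`). -/
noncomputable def maxFirst {Ω : Type*} (W : ℕ → Ω → ℝ) : ℕ → Ω → ℝ
  | 0, ω => W 0 ω
  | n + 1, ω => max (maxFirst W n ω) (W n ω)

lemma maxFirst_le_iff {Ω : Type*} (W : ℕ → Ω → ℝ) (ω : Ω) (x : ℝ) :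
    ∀ n : ℕ, (maxFirst W (n + 1) ω ≤ x ↔ ∀ i < n + 1, W i ω ≤ x)
  | 0 => by simp [maxFirst]
  | (n + 1) => by
    rw [show maxFirst W (n + 2) ω = max (maxFirst W (n + 1) ω) (W (n + 1) ω) from rfl,
      max_le_iff, maxFirst_le_iff W ω x n]
    constructor
    · rintro ⟨h1, h2⟩ i hi
      rcases Nat.lt_succ_iff_lt_or_eq.1 hi with h | rfl
      · exact h1 i h
      · exact h2
    · intro h
      exact ⟨fun i hi => h i (hi.trans (Nat.lt_succ_self _)), h _ (Nat.lt_succ_self _)⟩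

lemma measurable_maxFirst {Ω : Type*} [MeasurableSpace Ω] (W : ℕ → Ω → ℝ)
    (hmeas : ∀ i, Measurable (W i)) : ∀ n, Measurable (maxFirst W n)
  | 0 => hmeas 0
  | (n + 1) => Measurable.max (measurable_maxFirst W hmeas n) (hmeas n)

lemma cdf_maxFirst {Ω : Type*} [MeasurableSpace Ω] (P : Measure Ω) [IsProbabilityMeasure P]
    (W : ℕ → Ω → ℝ) (μ : Measure ℝ)
    (hmeas : ∀ i, Measurable (W i))
    (hindep : ProbabilityTheory.iIndepFun W P)
    (hdist : ∀ i, Measure.map (W i) P = μ) (n : ℕ) (x : ℝ) :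
    P {ω | maxFirst W (n + 1) ω ≤ x} = μ (Iic x) ^ (n + 1) := by
  have hset : {ω | maxFirst W (n + 1) ω ≤ x} = ⋂ i ∈ Finset.range (n + 1), W i ⁻¹' Iic x := by
    ext ω
    simp only [mem_setOf_eq, maxFirst_le_iff, mem_iInter, Finset.mem_range, mem_preimage, mem_Iic]
  rw [hset, hindep.meas_biInter (fun i _ => ⟨Iic x, measurableSet_Iic, rfl⟩)]
  have hP : ∀ i, P (W i ⁻¹' Iic x) = μ (Iic x) := fun i => by
    rw [← hdist i, Measure.map_apply (hmeas i) measurableSet_Iic]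
  rw [Finset.prod_congr rfl fun i _ => hP i, Finset.prod_const, Finset.card_range]

lemma cdf_maxFirst' {Ω : Type*} [MeasurableSpace Ω] (P : Measure Ω) [IsProbabilityMeasure P]
    (W : ℕ → Ω → ℝ) (μ : Measure ℝ)
    (hmeas : ∀ i, Measurable (W i))
    (hindep : ProbabilityTheory.iIndepFun W P)
    (hdist : ∀ i, Measure.map (W i) P = μ) (n : ℕ) (hn : 1 ≤ n) (x : ℝ) :
    P {ω | maxFirst W n ω ≤ x} = μ (Iic x) ^ n := by
  obtain ⟨m, rfl⟩ : ∃ m, n = m + 1 := ⟨n - 1, (Nat.succ_pred_eq_of_pos hn).symm⟩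
  exact cdf_maxFirst P W μ hmeas hindep hdist m x

theorem stmt_8 {Ω : Type*} [MeasurableSpace Ω] (P : Measure Ω) [IsProbabilityMeasure P]
    (W : ℕ → Ω → ℝ) (μ : Measure ℝ) [IsProbabilityMeasure μ]
    (hmeas : ∀ i, Measurable (W i))
    (hindep : ProbabilityTheory.iIndepFun W P)
    (hdist : ∀ i, Measure.map (W i) P = μ)
    (M : ℝ) (F : ℝ → ℝ) (hF : ∀ x, F x = (μ (Iic x)).toReal) (hFM : F M = 1)
    (d : ℝ) (hd : 0 < d) (hderiv : HasDerivWithinAt F d (Iio M) M)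
    (L : ℕ → ℝ) (hL : Tendsto L atTop (nhds d))
    (a : ℕ → ℝ) (ha_pos : ∀ n, 0 < a n) (ha0 : Tendsto a atTop (nhds 0))
    (han : Tendsto (fun n : ℕ => a n * n) atTop atTop)
    (O : Set ℝ) (hO_sub : O ⊆ Iic 0)
    (hO_open : IsOpen (Subtype.val ⁻¹' O : Set (Iic (0 : ℝ))))
    (z : ℝ) (hz : z ∈ O) :
    ((z : ℝ) : EReal) ≤
      liminf (fun n : ℕ =>
        ((a n : ℝ) : EReal) *
          ENNReal.log (P {ω | a n * n * L n * (maxFirst W n ω - M) ∈ O})) atTop := by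
  classical
  have hz0 : z ≤ 0 := hO_sub hz
  -- choose a relatively open interval around z inside O
  obtain ⟨ε, hε, hball⟩ : ∃ ε > 0, ∀ y : ℝ, y ≤ 0 → |y - z| < ε → y ∈ O := by
    have hzm : (⟨z, hz0⟩ : Iic (0 : ℝ)) ∈ (Subtype.val ⁻¹' O : Set (Iic (0 : ℝ))) := hz
    rcases Metric.isOpen_iff.1 hO_open _ hzm with ⟨ε, hε, hb⟩
    refine ⟨ε, hε, fun y hy hlt => ?_⟩
    exact hb (show (⟨y, hy⟩ : Iic (0 : ℝ)) ∈ Metric.ball _ _ by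
      simpa [Metric.mem_ball, Subtype.dist_eq, Real.dist_eq] using hlt)
  set l : ℝ := z - ε / 2 with hl_def
  set r : ℝ := min (z + ε / 2) 0 with hr_def
  clear_value l r
  have hlr : l < r := by
    rw [hl_def, hr_def, lt_min_iff]
    constructor <;> linarith
  have hr0 : r ≤ 0 := by rw [hr_def]; exact min_le_right _ _
  have hl0 : l ≤ 0 := hlr.le.trans hr0
  have hzr : z ≤ r := by
    rw [hr_def, le_min_iff]
    constructor <;> linarith
  have hsub : Ioc l r ⊆ O := by
    rintro x ⟨hx1, hx2⟩
    refine hball x (hx2.trans hr0) ?_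
    rw [abs_lt]
    have hxr : x ≤ z + ε / 2 := hx2.trans (by rw [hr_def]; exact min_le_left _ _)
    constructor <;> linarith [hx1, hxr, hl_def, hε]
  -- the scaling sequence
  set c : ℕ → ℝ := fun n => a n * n * L n with hc_def
  have hc_top : Tendsto c atTop atTop := han.atTop_mul_pos hd hL
  have hc_pos : ∀ᶠ n in atTop, 0 < c n := hc_top.eventually_gt_atTop 0
  have hLpos : ∀ᶠ n in atTop, 0 < L n := hL.eventually (eventually_gt_nhds hd)
  -- continuity of F from the left at M
  have hFcont : Tendsto F (𝓝[Iic M] M) (𝓝 1) := by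
    have h1 : ContinuousWithinAt F (insert M (Iio M)) M :=
      continuousWithinAt_insert_self.2 hderiv.continuousWithinAt
    rw [Iio_insert] at h1
    simpa [ContinuousWithinAt, hFM] using h1
  -- derivative of log ∘ F
  have hlogF : HasDerivWithinAt (fun x => Real.log (F x)) d (Iio M) M := by
    have h1 : HasDerivAt Real.log (F M)⁻¹ (F M) :=
      Real.hasDerivAt_log (by rw [hFM]; exact one_ne_zero)
    have h2 := h1.comp_hasDerivWithinAt M hderiv
    simpa [Function.comp_def, hFM] using h2
  have hslope : Tendsto (fun y => Real.log (F y) / (y - M)) (𝓝[Iio M] M) (𝓝 d) := by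
    have h := (hasDerivWithinAt_iff_tendsto_slope' (notMem_Iio.mpr le_rfl)).1 hlogF
    exact h.congr fun y => by rw [slope_def_field, hFM, Real.log_one, sub_zero]
  -- the argument tends to M from within Iic M
  have harg : ∀ u : ℝ, Tendsto (fun n => M + u / c n) atTop (𝓝 M) := fun u => by
    simpa using tendsto_const_nhds.add (Tendsto.div_atTop (tendsto_const_nhds (x := u)) hc_top)
  have hargIic : ∀ u : ℝ, u ≤ 0 → Tendsto (fun n => M + u / c n) atTop (𝓝[Iic M] M) := by
    intro u hu
    rw [tendsto_nhdsWithin_iff]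
    refine ⟨harg u, ?_⟩
    filter_upwards [hc_pos] with n hc
    have : u / c n ≤ 0 := div_nonpos_iff.2 (Or.inr ⟨hu, hc.le⟩)
    simpa [mem_Iic] using by linarith
  have hFpos : ∀ u : ℝ, u ≤ 0 → ∀ᶠ n in atTop, 0 < F (M + u / c n) := by
    intro u hu
    have h1 : Tendsto (fun n => F (M + u / c n)) atTop (𝓝 1) := hFcont.comp (hargIic u hu)
    exact h1.eventually (eventually_gt_nhds zero_lt_one)
  -- key limit: a n * (n * log F (M + u / c n)) → u for u ≤ 0
  have hkey : ∀ u : ℝ, u ≤ 0 →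
      Tendsto (fun n => a n * ((n : ℝ) * Real.log (F (M + u / c n)))) atTop (𝓝 u) := by
    intro u hu
    rcases hu.lt_or_eq with hu' | rfl
    · have h2 : Tendsto (fun n => M + u / c n) atTop (𝓝[Iio M] M) := by
        rw [tendsto_nhdsWithin_iff]
        refine ⟨harg u, ?_⟩
        filter_upwards [hc_pos] with n hc
        have : u / c n < 0 := div_neg_of_neg_of_pos hu' hc
        simpa [mem_Iio] using by linarith
      have h3 : Tendsto (fun n => Real.log (F (M + u / c n)) / (u / c n)) atTop (𝓝 d) := by
        have h := hslope.comp h2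
        exact h.congr fun n => by simp [Function.comp]
      have h4 : Tendsto (fun n => u / L n) atTop (𝓝 (u / d)) :=
        tendsto_const_nhds.div hL hd.ne'
      have h5 := h4.mul h3
      rw [div_mul_cancel₀ _ hd.ne'] at h5
      refine h5.congr' ?_
      filter_upwards [hc_pos, hLpos, eventually_gt_atTop 0] with n hc hLn hn1
      have hu0 : u ≠ 0 := hu'.ne
      have hc0 : c n ≠ 0 := hc.ne'
      have han0 : a n ≠ 0 := (ha_pos n).ne'
      have hn0 : (n : ℝ) ≠ 0 := Nat.cast_ne_zero.2 hn1.ne'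
      have hL0 : L n ≠ 0 := hLn.ne'
      rw [hc_def] at hc0 ⊢
      simp only at hc0 ⊢
      field_simp
    · simpa [hFM] using tendsto_const_nhds (x := (0 : ℝ)) (f := atTop (α := ℕ))
  -- differences tend to -∞
  have hdiff : ∀ u v : ℝ, u < v → v ≤ 0 →
      Tendsto (fun n : ℕ => (n : ℝ) * Real.log (F (M + u / c n)) -
        (n : ℝ) * Real.log (F (M + v / c n))) atTop atBot := by
    intro u v huv hv
    have h1 := (hkey u (huv.le.trans hv)).sub (hkey v hv)
    have h1' : Tendsto (fun n => a n * ((n : ℝ) * Real.log (F (M + u / c n)) -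
        (n : ℝ) * Real.log (F (M + v / c n)))) atTop (𝓝 (u - v)) :=
      h1.congr fun n => by ring
    have h2 : Tendsto (fun n => (a n)⁻¹) atTop atTop := by
      apply Filter.Tendsto.inv_tendsto_nhdsGT_zero
      rw [tendsto_nhdsWithin_iff]
      exact ⟨ha0, Eventually.of_forall fun n => ha_pos n⟩
    have h3 := h2.atTop_mul_neg (show u - v < 0 by linarith) h1'
    exact h3.congr fun n => by rw [inv_mul_cancel_left₀ (ha_pos n).ne']
  -- exp of the difference for l, r
  have hδ := hdiff l r hlr hr0
  have hexp : Tendsto (fun n : ℕ => Real.exp ((n : ℝ) * Real.log (F (M + l / c n)) -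
      (n : ℝ) * Real.log (F (M + r / c n)))) atTop (𝓝 0) :=
    Real.tendsto_exp_atBot.comp hδ
  have hexp1 : ∀ᶠ n : ℕ in atTop, Real.exp ((n : ℝ) * Real.log (F (M + l / c n)) -
      (n : ℝ) * Real.log (F (M + r / c n))) < 1 :=
    hexp.eventually (eventually_lt_nhds zero_lt_one)
  -- representation of the interval probability density
  have hrep : ∀ᶠ n in atTop,
      (F (M + r / c n) ^ n - F (M + l / c n) ^ n =
        Real.exp ((n : ℝ) * Real.log (F (M + r / c n))) *
          (1 - Real.exp ((n : ℝ) * Real.log (F (M + l / c n)) -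
            (n : ℝ) * Real.log (F (M + r / c n)))) ∧
        0 < F (M + r / c n) ^ n - F (M + l / c n) ^ n ∧
        Real.exp ((n : ℝ) * Real.log (F (M + l / c n)) -
            (n : ℝ) * Real.log (F (M + r / c n))) < 1) := by
    filter_upwards [hFpos l hl0, hFpos r hr0, hexp1] with n h1 h2 h3
    have e1 : F (M + r / c n) ^ n = Real.exp ((n : ℝ) * Real.log (F (M + r / c n))) := by
      rw [Real.exp_nat_mul, Real.exp_log h2]
    have e2 : F (M + l / c n) ^ n = Real.exp ((n : ℝ) * Real.log (F (M + l / c n))) := by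
      rw [Real.exp_nat_mul, Real.exp_log h1]
    have heq : F (M + r / c n) ^ n - F (M + l / c n) ^ n =
        Real.exp ((n : ℝ) * Real.log (F (M + r / c n))) *
          (1 - Real.exp ((n : ℝ) * Real.log (F (M + l / c n)) -
            (n : ℝ) * Real.log (F (M + r / c n)))) := by
      rw [e1, e2, mul_sub, mul_one, ← Real.exp_add]
      ring_nf
    refine ⟨heq, ?_, h3⟩
    rw [heq]
    exact mul_pos (Real.exp_pos _) (by linarith)
  -- main real limit
  set s : ℕ → ℝ := fun n => a n * Real.log (F (M + r / c n) ^ n - F (M + l / c n) ^ n)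
    with hs_def
  have hmain : Tendsto s atTop (𝓝 r) := by
    have hlog1 : Tendsto (fun n : ℕ => Real.log (1 - Real.exp ((n : ℝ) * Real.log (F (M + l / c n)) -
        (n : ℝ) * Real.log (F (M + r / c n))))) atTop (𝓝 0) := by
      have h := (tendsto_const_nhds (x := (1 : ℝ))).sub hexp
      rw [sub_zero] at h
      have h2 := (Real.continuousAt_log one_ne_zero).tendsto.comp h
      simpa [Real.log_one, Function.comp_def] using h2
    have h1 := (hkey r hr0).add (ha0.mul hlog1)
    rw [mul_zero, add_zero] at h1
    refine h1.congr' ?_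
    filter_upwards [hrep] with n ⟨heq, hpos, he1⟩
    rw [hs_def]
    simp only
    rw [heq, Real.log_mul (Real.exp_ne_zero _) (by linarith), Real.log_exp]
    ring
  -- pass to EReal
  have hzr' : ((z : ℝ) : EReal) ≤ ((r : ℝ) : EReal) := EReal.coe_le_coe_iff.2 hzr
  refine hzr'.trans ?_
  have hlimcoe : Tendsto (fun n => ((s n : ℝ) : EReal)) atTop (𝓝 ((r : ℝ) : EReal)) :=
    (continuous_coe_real_ereal.tendsto r).comp hmain
  rw [← hlimcoe.liminf_eq]
  refine liminf_le_liminf ?_ (by isBoundedDefault) (by isBoundedDefault)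
  filter_upwards [hrep, hc_pos, eventually_ge_atTop 1] with n hrepn hcpos hn1
  obtain ⟨heq, hpos, he1⟩ := hrepn
  set α := M + l / c n with hα_def
  set β := M + r / c n with hβ_def
  have hαβ : α ≤ β := by
    rw [hα_def, hβ_def]
    exact add_le_add_right ((div_le_div_iff_of_pos_right hcpos).2 hlr.le) M
  have hqP : P {ω | maxFirst W n ω ∈ Ioc α β} = μ (Iic β) ^ n - μ (Iic α) ^ n := by
    have hset : {ω | maxFirst W n ω ∈ Ioc α β} =
        {ω | maxFirst W n ω ≤ β} \ {ω | maxFirst W n ω ≤ α} := by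
      ext ω
      simp only [mem_setOf_eq, mem_Ioc, mem_diff, not_le]
      tauto
    have hdiffm : P ({ω | maxFirst W n ω ≤ β} \ {ω | maxFirst W n ω ≤ α}) =
        P {ω | maxFirst W n ω ≤ β} - P {ω | maxFirst W n ω ≤ α} :=
      measure_diff (fun ω hω => le_trans hω hαβ)
        ((measurable_maxFirst W hmeas n measurableSet_Iic).nullMeasurableSet)
        (measure_ne_top P _)
    rw [hset, hdiffm, cdf_maxFirst' P W μ hmeas hindep hdist n hn1 β,
      cdf_maxFirst' P W μ hmeas hindep hdist n hn1 α]
  have hq_toReal : (P {ω | maxFirst W n ω ∈ Ioc α β}).toReal = F β ^ n - F α ^ n := by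
    rw [hqP, ENNReal.toReal_sub_of_le
      (pow_le_pow_left₀ zero_le (measure_mono (Iic_subset_Iic.2 hαβ)) n)
      (ENNReal.pow_ne_top (measure_ne_top μ _)),
      ENNReal.toReal_pow, ENNReal.toReal_pow, hF, hF]
  have hq_pos : 0 < (P {ω | maxFirst W n ω ∈ Ioc α β}).toReal := by
    rw [hq_toReal]; exact hpos
  have hlogq : ENNReal.log (P {ω | maxFirst W n ω ∈ Ioc α β}) =
      ((Real.log (F β ^ n - F α ^ n) : ℝ) : EReal) := by
    rw [ENNReal.log_pos_real' hq_pos, hq_toReal]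
  have hincl : {ω | maxFirst W n ω ∈ Ioc α β} ⊆
      {ω | a n * n * L n * (maxFirst W n ω - M) ∈ O} := by
    intro ω hω
    obtain ⟨h1, h2⟩ := hω
    have hcn : a n * n * L n = c n := by rw [hc_def]
    refine hsub ⟨?_, ?_⟩
    · rw [hcn]
      have : l / c n < maxFirst W n ω - M := by rw [hα_def] at h1; linarith
      have := (div_lt_iff₀ hcpos).1 this
      linarith [this]
    · rw [hcn]
      have : maxFirst W n ω - M ≤ r / c n := by rw [hβ_def] at h2; linarith
      have := (le_div_iff₀ hcpos).1 this
      linarith [this]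
  have hmono : ENNReal.log (P {ω | maxFirst W n ω ∈ Ioc α β}) ≤
      ENNReal.log (P {ω | a n * n * L n * (maxFirst W n ω - M) ∈ O}) :=
    ENNReal.log_monotone (measure_mono hincl)
  have ha_nonneg : (0 : EReal) ≤ ((a n : ℝ) : EReal) := by
    exact_mod_cast (ha_pos n).le
  calc ((s n : ℝ) : EReal)
      = ((a n : ℝ) : EReal) * ((Real.log (F β ^ n - F α ^ n) : ℝ) : EReal) := by
        rw [← EReal.coe_mul]
    _ = ((a n : ℝ) : EReal) * ENNReal.log (P {ω | maxFirst W n ω ∈ Ioc α β}) := by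
        rw [hlogq]
    _ ≤ ((a n : ℝ) : EReal) *
        ENNReal.log (P {ω | a n * n * L n * (maxFirst W n ω - M) ∈ O}) :=
        mul_le_mul_of_nonneg_left hmono ha_nonneg
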